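/- Let f : [0,1] → ℝ be a piecewise linear function covered by a set of k lines, and let r ≥ 0 and c ≥ 0 be reals. Then the function g(t) = min over t' ∈ [t,1] of (r·(t' - t) + f(t') + c) is piecewise linear and covered by a set of at most k + 1 lines (the k shifted lines plus lines of slope -r). -/

import Mathlib

/-- `f` is, on `[0,1]`, a piecewise linear function each of whose (maximal) affine
pieces is contained in one of `k` lines. -/
def CoveredByLines (f : ℝ → ℝ) (k : ℕ) : Prop :=
  ∃ (m : ℕ) (t : Fin (m+1) → ℝ) (L : Fin k → ℝ × ℝ) (l : Fin m → Fin k),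
    Monotone t ∧ t 0 = 0 ∧ t (Fin.last m) = 1 ∧
    ∀ j : Fin m, ∀ s ∈ Set.Icc (t j.castSucc) (t j.succ),
      f s = (L (l j)).1 * s + (L (l j)).2

open Finset Set
namespace Stmt10Aux
variable {k m : ℕ}
noncomputable def Fv (r : ℝ) (f : ℝ → ℝ) (t : Fin (m+1) → ℝ) (i : Fin (m+1)) : ℝ :=
  r * t i + f (t i)
noncomputable def Av (r : ℝ) (f : ℝ → ℝ) (t : Fin (m+1) → ℝ) (j : Fin (m+1)) : ℝ :=
  (Finset.Ici j).inf' ⟨j, Finset.mem_Ici.2 le_rfl⟩ (Fv r f t)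
lemma Av_le (r : ℝ) (f : ℝ → ℝ) (t : Fin (m+1) → ℝ) {j i : Fin (m+1)} (h : j ≤ i) :
    Av r f t j ≤ Fv r f t i :=
  Finset.inf'_le _ (Finset.mem_Ici.2 h)
lemma Av_attained (r : ℝ) (f : ℝ → ℝ) (t : Fin (m+1) → ℝ) (j : Fin (m+1)) :
    ∃ i, j ≤ i ∧ Av r f t j = Fv r f t i := by
  obtain ⟨i, hi, he⟩ := Finset.exists_mem_eq_inf' (⟨j, Finset.mem_Ici.2 le_rfl⟩ :
    (Finset.Ici j).Nonempty) (Fv r f t)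
  exact ⟨i, Finset.mem_Ici.1 hi, he⟩
variable (r c : ℝ) (f : ℝ → ℝ) (t : Fin (m+1) → ℝ) (L : Fin k → ℝ × ℝ) (l : Fin m → Fin k)
noncomputable def sl (j : Fin m) : ℝ := (L (l j)).1 + r
noncomputable def Pe (j : Fin m) (x : ℝ) : ℝ := (L (l j)).1 * x + ((L (l j)).2 + c)
noncomputable def Qe (j : Fin m) (x : ℝ) : ℝ := -r * x + (Av r f t j.succ + c)
def needed (j : Fin m) : Prop :=
  sl r L l j < 0 ∨ Av r f t j.succ < Fv r f t j.succ
lemma pv_nonempty (j : Fin m) :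
    ((Finset.Ici j.succ).filter fun p => Fv r f t p = Av r f t j.succ).Nonempty := by
  obtain ⟨i, hi, he⟩ := Av_attained r f t j.succ
  exact ⟨i, Finset.mem_filter.2 ⟨Finset.mem_Ici.2 hi, he.symm⟩⟩
noncomputable def pv (j : Fin m) : Fin (m+1) :=
  ((Finset.Ici j.succ).filter fun p => Fv r f t p = Av r f t j.succ).min'
    (pv_nonempty r f t j)
lemma pv_ge (j : Fin m) : j.succ ≤ pv r f t j := by
  have := Finset.min'_mem _ (pv_nonempty r f t j)
  exact Finset.mem_Ici.1 (Finset.mem_filter.1 this).1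
lemma pv_spec (j : Fin m) : Fv r f t (pv r f t j) = Av r f t j.succ := by
  have := Finset.min'_mem _ (pv_nonempty r f t j)
  exact (Finset.mem_filter.1 this).2
lemma pv_min (j : Fin m) {q : Fin (m+1)} (hq : j.succ ≤ q)
    (hFq : Fv r f t q = Av r f t j.succ) : pv r f t j ≤ q :=
  Finset.min'_le _ _ (Finset.mem_filter.2 ⟨Finset.mem_Ici.2 hq, hFq⟩)
noncomputable def pp (j : Fin m) : Fin m :=
  ⟨(pv r f t j : ℕ) - 1, by
    have h1 := pv_ge r f t j
    have h2 := (pv r f t j).isLt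
    rw [Fin.le_def, Fin.val_succ] at h1
    omega⟩
lemma pp_succ (j : Fin m) : (pp r f t j).succ = pv r f t j := by
  have h1 := pv_ge r f t j
  rw [Fin.le_def, Fin.val_succ] at h1
  ext
  simp only [pp, Fin.val_succ]
  omega
lemma pp_val (j : Fin m) : (pp r f t j : ℕ) = (pv r f t j : ℕ) - 1 := rfl
noncomputable def qi (j : Fin m) : Fin k := l (pp r f t j)

-- hypothesis-dependent lemmas
variable (hmono : Monotone t) (h1 : t (Fin.last m) = 1)
  (hcov : ∀ j : Fin m, ∀ s ∈ Set.Icc (t j.castSucc) (t j.succ),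
      f s = (L (l j)).1 * s + (L (l j)).2)

include hmono


lemma tle (j : Fin m) : t j.castSucc ≤ t j.succ :=
  hmono (Fin.castSucc_lt_succ : j.castSucc < j.succ).le

include hcov

lemma Fv_castSucc (j : Fin m) :
    Fv r f t j.castSucc = sl r L l j * t j.castSucc + (L (l j)).2 := by
  have := hcov j (t j.castSucc) ⟨le_rfl, tle t hmono j⟩
  simp only [Fv, sl, this]; ring

lemma Fv_succ (j : Fin m) :
    Fv r f t j.succ = sl r L l j * t j.succ + (L (l j)).2 := by
  have := hcov j (t j.succ) ⟨tle t hmono j, le_rfl⟩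
  simp only [Fv, sl, this]; ring

lemma dead (j : Fin m) (hj : needed r f t L l j) :
    (L (qi r f t l j)).1 + r < 0 := by
  have hge := pv_ge r f t j
  rw [Fin.le_def, Fin.val_succ] at hge
  rcases eq_or_lt_of_le hge with heq | hgt
  · -- pv j = j.succ, pp j = j
    have hppj : pp r f t j = j := by ext; simp only [pp]; omega
    have hpvj : pv r f t j = j.succ := by ext; simp [Fin.val_succ, heq.symm]
    rcases hj with hs | hlt
    · simpa [qi, hppj, sl] using hs
    · exfalso
      have := pv_spec r f t j
      rw [hpvj] at this
      linarith
  · -- pv j > j + 1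
    set q := (pp r f t j).castSucc with hq
    have hq1 : j.succ ≤ q := by
      rw [Fin.le_def, Fin.val_succ, hq, Fin.coe_castSucc, pp_val]
      omega
    have hqlt : (q : ℕ) < (pv r f t j : ℕ) := by
      rw [hq, Fin.coe_castSucc, pp_val]; omega
    have hne : Fv r f t q ≠ Av r f t j.succ := by
      intro he
      have := pv_min r f t j hq1 he
      rw [Fin.le_def] at this; omega
    have hgt2 : Av r f t j.succ < Fv r f t q :=
      lt_of_le_of_ne (Av_le r f t hq1) (Ne.symm hne)
    have e1 : Fv r f t q = sl r L l (pp r f t j) * t q + (L (l (pp r f t j))).2 :=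
      Fv_castSucc r f t L l hmono hcov (pp r f t j)
    have e2 : Fv r f t (pv r f t j) =
        sl r L l (pp r f t j) * t (pv r f t j) + (L (l (pp r f t j))).2 := by
      rw [← pp_succ r f t j]
      exact Fv_succ r f t L l hmono hcov (pp r f t j)
    have e3 := pv_spec r f t j
    have htle : t q ≤ t (pv r f t j) := by
      apply hmono
      rw [← pp_succ r f t j]
      exact Fin.castSucc_lt_succ.le
    have : sl r L l (pp r f t j) < 0 := by nlinarith
    simpa [qi, sl] using this

lemma lineval (j : Fin m) :
    Av r f t j.succ = ((L (qi r f t l j)).1 + r) * t (pv r f t j) + (L (qi r f t l j)).2 := by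
  have e2 : Fv r f t (pv r f t j) =
      sl r L l (pp r f t j) * t (pv r f t j) + (L (l (pp r f t j))).2 := by
    rw [← pp_succ r f t j]
    exact Fv_succ r f t L l hmono hcov (pp r f t j)
  rw [← pv_spec r f t j, e2]; rfl

lemma inj_aux (j j' : Fin m) (hj : needed r f t L l j)
    (he : qi r f t l j = qi r f t l j')
    (hv : Av r f t j.succ < Av r f t j'.succ) : False := by
  have h1 : pv r f t j < j'.succ := by
    by_contra h
    push_neg at h
    have h2 := Av_le r f t h
    rw [pv_spec] at h2
    linarith
  have h2 : pv r f t j < pv r f t j' := lt_of_lt_of_le h1 (pv_ge r f t j')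
  have h3 : t (pv r f t j) ≤ t (pv r f t j') := hmono h2.le
  have e1 := lineval r f t L l hmono hcov j
  have e2 := lineval r f t L l hmono hcov j'
  have hd := dead r f t L l hmono hcov j hj
  rw [← he] at e2
  nlinarith

lemma inj (j j' : Fin m) (hj : needed r f t L l j) (hj' : needed r f t L l j')
    (he : qi r f t l j = qi r f t l j') : Av r f t j.succ = Av r f t j'.succ := by
  rcases lt_trichotomy (Av r f t j.succ) (Av r f t j'.succ) with h | h | h
  · exact absurd (inj_aux r f t L l hmono hcov j j' hj he h) id
  · exact h
  · exact absurd (inj_aux r f t L l hmono hcov j' j hj' he.symm h) id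

open Classical in
noncomputable def Lv : Fin (k+1) → ℝ × ℝ := fun i =>
  if h : ∃ j : Fin m, needed r f t L l j ∧ (qi r f t l j).castSucc = i then
    (-r, Av r f t (h.choose).succ + c)
  else if h2 : (i : ℕ) < k then ((L ⟨i, h2⟩).1, (L ⟨i, h2⟩).2 + c)
  else (-r, c)

lemma Lv_P (j : Fin m) (hs : 0 ≤ sl r L l j) :
    Lv r c f t L l ((l j).castSucc) = ((L (l j)).1, (L (l j)).2 + c) := by
  have hne : ¬ ∃ j' : Fin m, needed r f t L l j' ∧
      (qi r f t l j').castSucc = (l j).castSucc := by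
    rintro ⟨j', hj', he⟩
    have he2 : qi r f t l j' = l j := Fin.castSucc_injective _ he
    have hd := dead r f t L l hmono hcov j' hj'
    rw [he2] at hd
    simp only [sl] at hs
    linarith
  have hlt : ((l j).castSucc : ℕ) < k := by
    rw [Fin.coe_castSucc]; exact (l j).isLt
  rw [Lv, dif_neg hne, dif_pos hlt]
  have h3 : (⟨((l j).castSucc : ℕ), hlt⟩ : Fin k) = l j := by ext; simp
  rw [h3]

lemma Lv_Q (j : Fin m) (hj : needed r f t L l j) :
    Lv r c f t L l ((qi r f t l j).castSucc) = (-r, Av r f t j.succ + c) := by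
  have hex : ∃ j' : Fin m, needed r f t L l j' ∧
      (qi r f t l j').castSucc = (qi r f t l j).castSucc := ⟨j, hj, rfl⟩
  rw [Lv, dif_pos hex]
  obtain ⟨hch, hche⟩ := hex.choose_spec
  have := inj r f t L l hmono hcov _ j hch hj (Fin.castSucc_injective _ hche)
  rw [this]
include h1

lemma Gform (j : Fin m) (x : ℝ)
    (hx : x ∈ Set.Icc (t j.castSucc) (t j.succ)) :
    sInf ((fun t' => r * (t' - x) + f t' + c) '' Set.Icc x 1) =
      min (Pe c L l j x) (Qe r c f t j x) := by
  obtain ⟨hx0, hx1'⟩ := hx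
  have hxle1 : x ≤ 1 := hx1'.trans (by rw [← h1]; exact hmono (Fin.le_last _))
  have hfx : f x = (L (l j)).1 * x + (L (l j)).2 := hcov j x ⟨hx0, hx1'⟩
  set S := (fun t' => r * (t' - x) + f t' + c) '' Set.Icc x 1 with hS
  have hSne : S.Nonempty := ⟨_, ⟨x, ⟨le_rfl, hxle1⟩, rfl⟩⟩
  have hLB : ∀ y ∈ S, min (Pe c L l j x) (Qe r c f t j x) ≤ y := by
    rintro y ⟨u, ⟨hxu, hu1⟩, rfl⟩
    have hne2 : (Finset.univ.filter fun i : Fin m => t i.castSucc ≤ u).Nonempty :=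
      ⟨j, by simp only [Finset.mem_filter, Finset.mem_univ, true_and]; exact hx0.trans hxu⟩
    set i := (Finset.univ.filter fun i : Fin m => t i.castSucc ≤ u).max' hne2 with hi
    have hiu : t i.castSucc ≤ u := by
      have := Finset.max'_mem _ hne2
      rw [← hi] at this
      exact (Finset.mem_filter.1 this).2
    have hji : j ≤ i := by
      apply Finset.le_max'
      simp only [Finset.mem_filter, Finset.mem_univ, true_and]
      exact hx0.trans hxu
    have hui : u ≤ t i.succ := by
      by_cases hm2 : (i : ℕ) + 1 < m
      · have hnmem : ¬ t (⟨(i : ℕ) + 1, hm2⟩ : Fin m).castSucc ≤ u := by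
          intro hmem
          have hle := Finset.le_max'
            (Finset.univ.filter fun i' : Fin m => t i'.castSucc ≤ u)
            (⟨(i : ℕ) + 1, hm2⟩ : Fin m)
            (by simp only [Finset.mem_filter, Finset.mem_univ, true_and]; exact hmem)
          rw [← hi, Fin.le_def] at hle
          simp at hle
        push_neg at hnmem
        have heq : (⟨(i : ℕ) + 1, hm2⟩ : Fin m).castSucc = i.succ := by
          ext; simp
        rw [heq] at hnmem
        exact hnmem.le
      · have hm3 : (i : ℕ) + 1 = m := by have := i.isLt; omega
        have heq : i.succ = Fin.last m := by ext; simp [hm3]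
        rw [heq, h1]
        exact hu1
    have hfu : f u = (L (l i)).1 * u + (L (l i)).2 := hcov i u ⟨hiu, hui⟩
    simp only []
    rcases le_or_gt 0 ((L (l i)).1 + r) with hsp | hsn
    · rcases eq_or_lt_of_le hji with heq | hlt
      · subst heq
        apply min_le_of_left_le
        simp only [Pe]
        rw [hfu]
        nlinarith [mul_nonneg hsp (sub_nonneg.2 hxu)]
      · have hic : j.succ ≤ i.castSucc := by
          rw [Fin.le_def, Fin.val_succ, Fin.coe_castSucc]
          exact hlt
        have hA := Av_le r f t hic
        rw [Fv_castSucc r f t L l hmono hcov i] at hA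
        apply min_le_of_right_le
        simp only [Qe, sl] at hA ⊢
        rw [hfu]
        nlinarith [mul_nonneg hsp (sub_nonneg.2 hiu)]
    · have his : j.succ ≤ i.succ := by
        rw [Fin.le_def, Fin.val_succ, Fin.val_succ]
        exact Nat.succ_le_succ hji
      have hA := Av_le r f t his
      rw [Fv_succ r f t L l hmono hcov i] at hA
      apply min_le_of_right_le
      simp only [Qe, sl] at hA ⊢
      rw [hfu]
      nlinarith [mul_nonneg (neg_nonneg.2 hsn.le) (neg_nonneg.2 (sub_nonpos.2 hui))]

  have hmem : min (Pe c L l j x) (Qe r c f t j x) ∈ S := by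
    rcases le_total (Pe c L l j x) (Qe r c f t j x) with hpq | hqp
    · rw [min_eq_left hpq]
      exact ⟨x, ⟨le_rfl, hxle1⟩, by simp only [Pe]; rw [hfx]; ring⟩
    · rw [min_eq_right hqp]
      obtain ⟨p, hp1, hp2⟩ := Av_attained r f t j.succ
      refine ⟨t p, ⟨hx1'.trans (hmono hp1), ?_⟩, ?_⟩
      · rw [← h1]; exact hmono (Fin.le_last p)
      · simp only [Qe]
        rw [hp2, Fv]
        ring
  exact le_antisymm (csInf_le ⟨_, fun y hy => hLB y hy⟩ hmem) (le_csInf hSne hLB)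
omit hmono h1 hcov in
lemma PQ' (j : Fin m) (x : ℝ) :
    Pe c L l j x - Qe r c f t j x = sl r L l j * x + (L (l j)).2 - Av r f t j.succ := by
  simp only [Pe, Qe, sl]; ring

omit hmono h1 hcov in
lemma AleF (j : Fin m) : Av r f t j.succ ≤ Fv r f t j.succ := Av_le r f t le_rfl

omit hmono h1 hcov in
lemma not_needed {j : Fin m} (hn : ¬ needed r f t L l j) :
    0 ≤ sl r L l j ∧ Av r f t j.succ = Fv r f t j.succ := by
  unfold needed at hn
  push_neg at hn
  exact ⟨hn.1, le_antisymm (AleF r f t j) hn.2⟩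

open Classical in
noncomputable def tau (j : Fin m) : ℝ :=
  if needed r f t L l j then
    (if 0 < sl r L l j then
      max (t j.castSucc) ((Av r f t j.succ - (L (l j)).2) / sl r L l j)
     else t j.castSucc)
  else t j.succ

open Classical in
noncomputable def cl (j : Fin m) : Fin (k+1) :=
  if needed r f t L l j ∧ Qe r c f t j (t j.castSucc) ≤ Pe c L l j (t j.castSucc)
  then (qi r f t l j).castSucc else (l j).castSucc

open Classical in
noncomputable def cr (j : Fin m) : Fin (k+1) :=
  if needed r f t L l j then (qi r f t l j).castSucc else (l j).castSucc

omit h1 in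
lemma tau_mem (j : Fin m) :
    tau r f t L l j ∈ Set.Icc (t j.castSucc) (t j.succ) := by
  unfold tau
  split_ifs with hn hs
  · refine ⟨le_max_left _ _, max_le (tle t hmono j) ?_⟩
    have hAF : Av r f t j.succ < Fv r f t j.succ := by
      rcases hn with h | h
      · exact absurd h (not_lt.2 hs.le)
      · exact h
    rw [div_le_iff₀ hs]
    have := Fv_succ r f t L l hmono hcov j
    nlinarith
  · exact ⟨le_rfl, tle t hmono j⟩
  · exact ⟨tle t hmono j, le_rfl⟩

lemma cl_eval (j : Fin m) (x : ℝ)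
    (hx : x ∈ Set.Icc (t j.castSucc) (tau r f t L l j)) :
    sInf ((fun t' => r * (t' - x) + f t' + c) '' Set.Icc x 1) =
      (Lv r c f t L l (cl r c f t L l j)).1 * x + (Lv r c f t L l (cl r c f t L l j)).2 := by
  have hxI : x ∈ Set.Icc (t j.castSucc) (t j.succ) :=
    ⟨hx.1, hx.2.trans (tau_mem r f t L l hmono hcov j).2⟩
  rw [Gform r c f t L l hmono h1 hcov j x hxI]
  by_cases hcond : needed r f t L l j ∧
      Qe r c f t j (t j.castSucc) ≤ Pe c L l j (t j.castSucc)
  · have htau : tau r f t L l j = t j.castSucc := by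
      unfold tau
      rw [if_pos hcond.1]
      split_ifs with hs
      · apply max_eq_left
        rw [div_le_iff₀ hs]
        have h2 := PQ' r c f t L l j (t j.castSucc)
        have h3 := hcond.2
        nlinarith
      · rfl
    have hxx : x = t j.castSucc := le_antisymm (htau ▸ hx.2) hx.1
    rw [min_eq_right (hxx ▸ hcond.2)]
    unfold cl
    rw [if_pos hcond, Lv_Q r c f t L l hmono hcov j hcond.1]
    simp only [Qe]
  · by_cases hn : needed r f t L l j
    · have hpq : Pe c L l j (t j.castSucc) < Qe r c f t j (t j.castSucc) := by
        by_contra h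
        push_neg at h
        exact hcond ⟨hn, h⟩
      have hs : 0 < sl r L l j := by
        by_contra hsc
        push_neg at hsc
        have h4 := PQ' r c f t L l j (t j.succ)
        have h5 := Fv_succ r f t L l hmono hcov j
        have h6 := AleF r f t j
        have h7 := PQ' r c f t L l j (t j.castSucc)
        have h8 := tle t hmono j
        nlinarith [mul_le_mul_of_nonpos_left h8 hsc]
      have htau : tau r f t L l j
          = (Av r f t j.succ - (L (l j)).2) / sl r L l j := by
        unfold tau
        rw [if_pos hn, if_pos hs]
        apply max_eq_right
        rw [le_div_iff₀ hs]
        have h7 := PQ' r c f t L l j (t j.castSucc)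
        nlinarith
      have hPle : Pe c L l j x ≤ Qe r c f t j x := by
        have hxle : x ≤ (Av r f t j.succ - (L (l j)).2) / sl r L l j := htau ▸ hx.2
        rw [le_div_iff₀ hs] at hxle
        have h7 := PQ' r c f t L l j x
        nlinarith
      rw [min_eq_left hPle]
      unfold cl
      rw [if_neg hcond, Lv_P r c f t L l hmono hcov j hs.le]
      simp only [Pe]
    · have hnf := not_needed r f t L l hn
      have hPle : Pe c L l j x ≤ Qe r c f t j x := by
        have h7 := PQ' r c f t L l j x
        have h5 := Fv_succ r f t L l hmono hcov j
        have h8 : x ≤ t j.succ := hxI.2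
        nlinarith [mul_le_mul_of_nonneg_left h8 hnf.1]
      rw [min_eq_left hPle]
      unfold cl
      rw [if_neg hcond, Lv_P r c f t L l hmono hcov j hnf.1]
      simp only [Pe]

lemma cr_eval (j : Fin m) (x : ℝ)
    (hx : x ∈ Set.Icc (tau r f t L l j) (t j.succ)) :
    sInf ((fun t' => r * (t' - x) + f t' + c) '' Set.Icc x 1) =
      (Lv r c f t L l (cr r f t L l j)).1 * x + (Lv r c f t L l (cr r f t L l j)).2 := by
  have hxI : x ∈ Set.Icc (t j.castSucc) (t j.succ) :=
    ⟨(tau_mem r f t L l hmono hcov j).1.trans hx.1, hx.2⟩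
  rw [Gform r c f t L l hmono h1 hcov j x hxI]
  by_cases hn : needed r f t L l j
  · have hQle : Qe r c f t j x ≤ Pe c L l j x := by
      rcases le_or_gt (sl r L l j) 0 with hs | hs
      · have h7 := PQ' r c f t L l j x
        have h5 := Fv_succ r f t L l hmono hcov j
        have h6 := AleF r f t j
        have h8 : x ≤ t j.succ := hxI.2
        nlinarith [mul_le_mul_of_nonpos_left h8 hs]
      · have htau : tau r f t L l j
            = max (t j.castSucc) ((Av r f t j.succ - (L (l j)).2) / sl r L l j) := by
          unfold tau
          rw [if_pos hn, if_pos hs]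
        have hx0 : (Av r f t j.succ - (L (l j)).2) / sl r L l j ≤ x :=
          le_trans (le_max_right _ _) (htau ▸ hx.1)
        rw [div_le_iff₀ hs] at hx0
        have h7 := PQ' r c f t L l j x
        nlinarith
    rw [min_eq_right hQle]
    unfold cr
    rw [if_pos hn, Lv_Q r c f t L l hmono hcov j hn]
    simp only [Qe]
  · have hnf := not_needed r f t L l hn
    have hPle : Pe c L l j x ≤ Qe r c f t j x := by
      have h7 := PQ' r c f t L l j x
      have h5 := Fv_succ r f t L l hmono hcov j
      have h8 : x ≤ t j.succ := hxI.2
      nlinarith [mul_le_mul_of_nonneg_left h8 hnf.1]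
    rw [min_eq_left hPle]
    unfold cr
    rw [if_neg hn, Lv_P r c f t L l hmono hcov j hnf.1]
    simp only [Pe]
noncomputable def tN : ℕ → ℝ := fun q => if h : q < m + 1 then t ⟨q, h⟩ else 0
noncomputable def tauN : ℕ → ℝ := fun q => if h : q < m then tau r f t L l ⟨q, h⟩ else 0
noncomputable def clN : ℕ → Fin (k+1) := fun q => if h : q < m then cl r c f t L l ⟨q, h⟩ else 0
noncomputable def crN : ℕ → Fin (k+1) := fun q => if h : q < m then cr r f t L l ⟨q, h⟩ else 0
end Stmt10Aux

open Stmt10Aux in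
theorem stmt10 (k : ℕ) (f : ℝ → ℝ) (hf : CoveredByLines f k)
    (r c : ℝ) (hr : 0 ≤ r) (hc : 0 ≤ c) :
    CoveredByLines
      (fun t => sInf ((fun t' => r * (t' - t) + f t' + c) '' Set.Icc t 1)) (k + 1) := by
  unfold CoveredByLines at hf ⊢
  classical
  obtain ⟨m, t, L, l, hmono, h0, h1, hcov⟩ := hf
  refine ⟨2*m,
    fun i => if (i : ℕ) % 2 = 0 then tN t ((i:ℕ)/2) else tauN r f t L l ((i:ℕ)/2),
    Lv r c f t L l,
    fun i => if (i : ℕ) % 2 = 0 then clN r c f t L l ((i:ℕ)/2) else crN r f t L l ((i:ℕ)/2),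
    ?_, ?_, ?_, ?_⟩
  · rw [Fin.monotone_iff_le_succ]
    rintro ⟨iv, hiv⟩
    simp only [Fin.castSucc_mk, Fin.succ_mk]
    by_cases hp : iv % 2 = 0
    · rw [if_pos hp, if_neg (by omega)]
      have h2 : (iv + 1) / 2 = iv / 2 := by omega
      rw [h2]
      have hq : iv / 2 < m := by omega
      rw [tN, tauN, dif_pos (by omega : iv / 2 < m + 1), dif_pos hq]
      exact (tau_mem r f t L l hmono hcov ⟨iv/2, hq⟩).1
    · rw [if_neg hp, if_pos (by omega)]
      have h2 : (iv + 1) / 2 = iv / 2 + 1 := by omega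
      rw [h2]
      have hq : iv / 2 < m := by omega
      rw [tN, tauN, dif_pos (by omega : iv / 2 + 1 < m + 1), dif_pos hq]
      exact (tau_mem r f t L l hmono hcov ⟨iv/2, hq⟩).2
  · beta_reduce
    simp only [Fin.val_zero]
    rw [if_pos (by norm_num)]
    rw [tN, Nat.zero_div, dif_pos (by omega : 0 < m + 1)]
    rw [Fin.mk_zero, h0]
  · beta_reduce
    simp only [Fin.val_last]
    rw [if_pos (by omega)]
    rw [tN, dif_pos (by omega : 2*m/2 < m+1)]
    have e : (⟨2*m/2, by omega⟩ : Fin (m+1)) = Fin.last m := by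
      ext; simp only [Fin.val_last]; omega
    rw [e, h1]
  · rintro ⟨iv, hiv⟩ x hx
    simp only [Fin.castSucc_mk, Fin.succ_mk] at hx
    beta_reduce
    simp only [Fin.val_mk]
    by_cases hp : iv % 2 = 0
    · rw [if_pos hp] at hx ⊢
      rw [if_neg (by omega)] at hx
      have h2 : (iv + 1) / 2 = iv / 2 := by omega
      rw [h2] at hx
      have hq : iv / 2 < m := by omega
      rw [tN, tauN, dif_pos (by omega : iv / 2 < m + 1), dif_pos hq] at hx
      rw [clN, dif_pos hq]
      exact cl_eval r c f t L l hmono h1 hcov ⟨iv/2, hq⟩ x hx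
    · rw [if_neg hp] at hx ⊢
      rw [if_pos (by omega)] at hx
      have h2 : (iv + 1) / 2 = iv / 2 + 1 := by omega
      rw [h2] at hx
      have hq : iv / 2 < m := by omega
      rw [tN, tauN, dif_pos (by omega : iv / 2 + 1 < m + 1), dif_pos hq] at hx
      rw [crN, dif_pos hq]
      exact cr_eval r c f t L l hmono h1 hcov ⟨iv/2, hq⟩ x hx
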